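/- Let d ≥ 1 and 0 < m < 1 with m < 1 − 2/d. Then ∫₀^π (1 − cos θ)^{1/(m−1)} sin^{d−1} θ cos θ dθ divided by ∫₀^π (1 − cos θ)^{1/(m−1)} sin^{d−1} θ dθ equals 1/((1−m)d − 1). -/

import Mathlib

open MeasureTheory Real Set

-- integrability of the density
lemma aux_int (d : ℕ) (hd : 1 ≤ d) (α : ℝ) (hα : α < 0) (h2 : 0 < 2*α + d) :
    IntegrableOn (fun θ => (1 - Real.cos θ) ^ α * Real.sin θ ^ (d - 1)) (Set.Ioo 0 π) := by
  have hmeas : AEStronglyMeasurable (fun θ => (1 - Real.cos θ) ^ α * Real.sin θ ^ (d - 1))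
      (volume.restrict (Set.Ioo 0 π)) := by
    refine (ContinuousOn.mul ?_ (Real.continuous_sin.continuousOn.pow _)).aestronglyMeasurable
      measurableSet_Ioo
    refine (continuous_const.sub Real.continuous_cos).continuousOn.rpow_const fun x hx => Or.inl ?_
    have : Real.cos x < 1 := by
      rcases hx with ⟨h0, hπ⟩
      have h := Real.cos_le_one_sub_mul_cos_sq (x := x) (by rw [abs_of_nonneg h0.le]; exact hπ.le)
      have hpos : 0 < 2 / π ^ 2 * x ^ 2 := by positivity
      linarith
    exact (sub_pos.mpr this).ne'
  set e : ℝ := 2*α + (d - 1 : ℕ) with he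
  have hde : ((d - 1 : ℕ) : ℝ) = (d : ℝ) - 1 := by
    push_cast [Nat.cast_sub hd]; ring
  have he1 : -1 < e := by rw [he, hde]; linarith
  have hg : IntegrableOn (fun θ => (2/π^2) ^ α * θ ^ e) (Set.Ioo 0 π) := by
    refine (((intervalIntegral.intervalIntegrable_rpow' he1 (a := 0) (b := π)).1).mono_set
      Set.Ioo_subset_Ioc_self).const_mul _
  refine hg.integrable.mono' hmeas ?_
  filter_upwards [ae_restrict_mem measurableSet_Ioo] with θ hθ
  obtain ⟨hθ0, hθπ⟩ := hθ
  have hsθ : 0 ≤ Real.sin θ := Real.sin_nonneg_of_nonneg_of_le_pi hθ0.le hθπ.le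
  have h1c : 0 ≤ 1 - Real.cos θ := by nlinarith [Real.cos_le_one θ]
  have hfnn : 0 ≤ (1 - Real.cos θ) ^ α * Real.sin θ ^ (d - 1) := by positivity
  rw [Real.norm_of_nonneg hfnn]
  have hq : (0:ℝ) < 2/π^2 * θ^2 := by positivity
  have hlb : 2/π^2 * θ^2 ≤ 1 - Real.cos θ := by
    have := Real.cos_le_one_sub_mul_cos_sq (x := θ) (by rw [abs_of_nonneg hθ0.le]; exact hθπ.le)
    linarith
  have h1 : (1 - Real.cos θ) ^ α ≤ (2/π^2 * θ^2) ^ α :=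
    Real.rpow_le_rpow_of_nonpos hq hlb hα.le
  have h2' : Real.sin θ ^ (d-1) ≤ θ ^ (d-1) :=
    pow_le_pow_left₀ hsθ (Real.sin_le hθ0.le) _
  have key : (2/π^2 * θ^2) ^ α * θ ^ (d-1) = (2/π^2) ^ α * θ ^ e := by
    rw [Real.mul_rpow (by positivity) (by positivity), he, mul_assoc]
    congr 1
    rw [← Real.rpow_natCast θ (d-1), ← Real.rpow_natCast θ 2, ← Real.rpow_mul hθ0.le,
      ← Real.rpow_add hθ0]
    norm_num [mul_comm]
  calc (1 - Real.cos θ) ^ α * Real.sin θ ^ (d-1)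
      ≤ (2/π^2 * θ^2) ^ α * θ ^ (d-1) := by
        apply mul_le_mul h1 h2' (by positivity) (by positivity)
    _ = (2/π^2) ^ α * θ ^ e := key


lemma aux_coslt {x : ℝ} (h0 : 0 < x) (hπ : x ≤ π) : Real.cos x < 1 := by
  have h := Real.cos_le_one_sub_mul_cos_sq (x := x) (by rw [abs_of_nonneg h0.le]; linarith)
  have hpos : 0 < 2 / π ^ 2 * x ^ 2 := by positivity
  linarith

-- integrability of the second moment
lemma aux_int2 (d : ℕ) (hd : 1 ≤ d) (α : ℝ) (hα : α < 0) (h2 : 0 < 2*α + d) :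
    IntegrableOn (fun θ => (1 - Real.cos θ) ^ α * Real.sin θ ^ (d - 1) * Real.cos θ)
      (Set.Ioo 0 π) := by
  have h1 := aux_int d hd α hα h2
  have hmeas : AEStronglyMeasurable
      (fun θ => (1 - Real.cos θ) ^ α * Real.sin θ ^ (d - 1) * Real.cos θ)
      (volume.restrict (Set.Ioo 0 π)) :=
    h1.aestronglyMeasurable.mul Real.continuous_cos.aestronglyMeasurable
  refine h1.integrable.mono' hmeas ?_
  filter_upwards [ae_restrict_mem measurableSet_Ioo] with θ hθ
  obtain ⟨h0, hπ⟩ := hθ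
  have hsθ : 0 ≤ Real.sin θ := Real.sin_nonneg_of_nonneg_of_le_pi h0.le hπ.le
  have h1c : 0 ≤ 1 - Real.cos θ := by have := aux_coslt h0 hπ.le; linarith
  have hfnn : 0 ≤ (1 - Real.cos θ) ^ α * Real.sin θ ^ (d - 1) := by positivity
  rw [norm_mul, Real.norm_of_nonneg hfnn]
  calc (1 - Real.cos θ) ^ α * Real.sin θ ^ (d-1) * ‖Real.cos θ‖
      ≤ (1 - Real.cos θ) ^ α * Real.sin θ ^ (d-1) * 1 := by
        apply mul_le_mul_of_nonneg_left _ hfnn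
        rw [Real.norm_eq_abs]; exact Real.abs_cos_le_one θ
    _ = (1 - Real.cos θ) ^ α * Real.sin θ ^ (d-1) := mul_one _

-- the FTC identity
lemma aux_key (d : ℕ) (hd : 1 ≤ d) (α : ℝ) (hα : α < 0) (h2 : 0 < 2*α + d) :
    α * (∫ θ in Set.Ioo 0 π, (1 - Real.cos θ) ^ α * Real.sin θ ^ (d - 1))
      + (α + d) * (∫ θ in Set.Ioo 0 π,
          (1 - Real.cos θ) ^ α * Real.sin θ ^ (d - 1) * Real.cos θ) = 0 := by
  have hint1 := aux_int d hd α hα h2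
  have hint2 := aux_int2 d hd α hα h2
  set f' : ℝ → ℝ := fun θ => α * ((1 - Real.cos θ) ^ α * Real.sin θ ^ (d - 1))
    + (α + (d:ℝ)) * ((1 - Real.cos θ) ^ α * Real.sin θ ^ (d - 1) * Real.cos θ) with hf'def
  set H : ℝ → ℝ := fun θ => (1 - Real.cos θ) ^ (α + (d:ℝ)/2) * (1 + Real.cos θ) ^ ((d:ℝ)/2)
    with hHdef
  have hβ : 0 < α + (d:ℝ)/2 := by linarith
  have hd2 : (0:ℝ) < (d:ℝ)/2 := by
    have : (1:ℝ) ≤ d := by exact_mod_cast hd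
    linarith
  have hderiv : ∀ x ∈ Set.Ioo 0 π, HasDerivAt H (f' x) x := by
    intro θ hθ
    obtain ⟨h0, hπ⟩ := hθ
    have hu : 0 < 1 - Real.cos θ := by have := aux_coslt h0 hπ.le; linarith
    have hv : 0 < 1 + Real.cos θ := by
      have h := aux_coslt (x := π - θ) (by linarith) (by linarith)
      rw [Real.cos_pi_sub] at h; linarith
    have hs : 0 < Real.sin θ := Real.sin_pos_of_pos_of_lt_pi h0 hπ
    have hc1 : HasDerivAt (fun x => 1 - Real.cos x) (Real.sin θ) θ := by
      simpa using (Real.hasDerivAt_cos θ).const_sub 1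
    have hc2 : HasDerivAt (fun x => 1 + Real.cos x) (-Real.sin θ) θ := by
      simpa using (Real.hasDerivAt_cos θ).const_add 1
    have hA := hc1.rpow_const (p := α + (d:ℝ)/2) (Or.inl hu.ne')
    have hB := hc2.rpow_const (p := (d:ℝ)/2) (Or.inl hv.ne')
    have hH : HasDerivAt H _ θ := hA.mul hB
    convert hH using 1
    set c := Real.cos θ
    set s := Real.sin θ
    have hs2 : s ^ 2 = (1 - c) * (1 + c) := by
      have := Real.sin_sq_add_cos_sq θ; nlinarith
    have e1 : (1 - c) ^ (α + (d:ℝ)/2 - 1) = (1-c) ^ α * (1-c) ^ ((d:ℝ)/2 - 1) := by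
      rw [← Real.rpow_add hu]; ring_nf
    have e2 : (1 - c) ^ (α + (d:ℝ)/2) = (1-c) ^ α * ((1-c) * (1-c) ^ ((d:ℝ)/2 - 1)) := by
      rw [show α + (d:ℝ)/2 = α + (1 + ((d:ℝ)/2 - 1)) by ring, Real.rpow_add hu,
        Real.rpow_add hu, Real.rpow_one]
    have e3 : (1 + c) ^ ((d:ℝ)/2) = (1+c) * (1+c) ^ ((d:ℝ)/2 - 1) := by
      nth_rewrite 2 [← Real.rpow_one (1+c)]
      rw [← Real.rpow_add hv]; ring_nf
    have e4 : s * ((1-c) ^ ((d:ℝ)/2 - 1) * (1+c) ^ ((d:ℝ)/2 - 1)) = s ^ (d - 1) := by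
      rw [← Real.mul_rpow hu.le hv.le, ← hs2, ← Real.rpow_natCast s 2,
        ← Real.rpow_mul hs.le]
      nth_rewrite 1 [← Real.rpow_one s]
      rw [← Real.rpow_add hs, ← Real.rpow_natCast s (d-1)]
      congr 1
      push_cast [Nat.cast_sub hd]
      ring
    rw [e1, e2, e3]
    linear_combination (-((1-c)^α * (α + (α + (d:ℝ)) * c))) * e4
  have hcont : Continuous H := by
    apply Continuous.mul
    · exact (continuous_const.sub Real.continuous_cos).rpow_const fun x => Or.inr hβ.le
    · exact (continuous_const.add Real.continuous_cos).rpow_const fun x => Or.inr hd2.le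
  have hf'int : IntervalIntegrable f' volume 0 π := by
    rw [intervalIntegrable_iff_integrableOn_Ioc_of_le Real.pi_pos.le,
      integrableOn_Ioc_iff_integrableOn_Ioo]
    exact (hint1.const_mul α).add (hint2.const_mul _)
  have hftc := intervalIntegral.integral_eq_sub_of_hasDeriv_right_of_le Real.pi_pos.le
    hcont.continuousOn (fun x hx => (hderiv x hx).hasDerivWithinAt) hf'int
  have hH0 : H 0 = 0 := by
    simp only [hHdef, Real.cos_zero, sub_self]
    rw [Real.zero_rpow hβ.ne']
    ring
  have hHπ : H π = 0 := by
    simp only [hHdef, Real.cos_pi]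
    rw [show (1:ℝ) + -1 = 0 by norm_num, Real.zero_rpow hd2.ne', mul_zero]
  rw [hH0, hHπ, sub_zero, intervalIntegral.integral_of_le Real.pi_pos.le,
    integral_Ioc_eq_integral_Ioo] at hftc
  have hsplit : ∫ θ in Set.Ioo 0 π, f' θ
      = α * (∫ θ in Set.Ioo 0 π, (1 - Real.cos θ) ^ α * Real.sin θ ^ (d - 1))
        + (α + d) * (∫ θ in Set.Ioo 0 π,
            (1 - Real.cos θ) ^ α * Real.sin θ ^ (d - 1) * Real.cos θ) := by
    simp only [hf'def]
    rw [integral_add ((hint1.integrable.const_mul α)) ((hint2.integrable.const_mul _)),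
      integral_const_mul, integral_const_mul]
  rw [← hsplit]
  exact hftc

theorem centre_of_mass_singular_density
    (d : ℕ) (hd : 1 ≤ d) (m : ℝ) (hm0 : 0 < m) (hm1 : m < 1)
    (hmd : m < 1 - 2 / (d : ℝ)) :
    (∫ θ in Set.Ioo 0 π,
        (1 - Real.cos θ) ^ ((1 : ℝ) / (m - 1)) * Real.sin θ ^ (d - 1) * Real.cos θ) /
      (∫ θ in Set.Ioo 0 π,
        (1 - Real.cos θ) ^ ((1 : ℝ) / (m - 1)) * Real.sin θ ^ (d - 1)) =
      1 / ((1 - m) * d - 1) := by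
  set α : ℝ := (1 : ℝ) / (m - 1) with hαdef
  have hd0 : (0:ℝ) < d := by exact_mod_cast hd
  have hm1' : m - 1 < 0 := by linarith
  have h1m : 0 < 1 - m := by linarith
  have hα : α < 0 := div_neg_of_pos_of_neg one_pos hm1'
  have hmd2 : 2 < (1 - m) * d := by
    have h' : 2 / (d:ℝ) < 1 - m := by linarith
    exact (div_lt_iff₀ hd0).mp h'
  have hαeq : α * (1 - m) = -1 := by
    rw [hαdef, div_mul_eq_mul_div, one_mul, div_eq_iff hm1'.ne]; ring
  have h2 : 0 < 2*α + (d:ℝ) := by nlinarith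
  have hαd : 0 < α + (d:ℝ) := by linarith
  have hkey := aux_key d hd α hα h2
  have hD : 0 < ∫ θ in Set.Ioo 0 π, (1 - Real.cos θ) ^ α * Real.sin θ ^ (d - 1) := by
    rw [setIntegral_pos_iff_support_of_nonneg_ae ?_ (aux_int d hd α hα h2)]
    · have hsub : Set.Ioo (0:ℝ) π ⊆
          (Function.support fun θ => (1 - Real.cos θ) ^ α * Real.sin θ ^ (d - 1))
            ∩ Set.Ioo 0 π := by
        intro θ hθ
        refine ⟨?_, hθ⟩
        obtain ⟨h0, hπ⟩ := hθ
        have hu : 0 < 1 - Real.cos θ := by have := aux_coslt h0 hπ.le; linarith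
        have hs : 0 < Real.sin θ := Real.sin_pos_of_pos_of_lt_pi h0 hπ
        have : 0 < (1 - Real.cos θ) ^ α * Real.sin θ ^ (d - 1) := by positivity
        exact this.ne'
      refine lt_of_lt_of_le ?_ (measure_mono hsub)
      rw [Real.volume_Ioo]
      simp [Real.pi_pos]
    · filter_upwards [ae_restrict_mem measurableSet_Ioo] with θ hθ
      obtain ⟨h0, hπ⟩ := hθ
      have hu : 0 ≤ 1 - Real.cos θ := by have := aux_coslt h0 hπ.le; linarith
      have hs : 0 ≤ Real.sin θ := Real.sin_nonneg_of_nonneg_of_le_pi h0.le hπ.le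
      positivity
  set D := ∫ θ in Set.Ioo 0 π, (1 - Real.cos θ) ^ α * Real.sin θ ^ (d - 1) with hDdef
  set N := ∫ θ in Set.Ioo 0 π, (1 - Real.cos θ) ^ α * Real.sin θ ^ (d - 1) * Real.cos θ
    with hNdef
  have hN : N = (-α/(α+d)) * D := by
    field_simp
    linarith
  rw [hN, mul_div_assoc, div_self hD.ne', mul_one]
  rw [div_eq_div_iff hαd.ne' (by nlinarith : (0:ℝ) < (1-m)*d - 1).ne']
  linear_combination (-(d:ℝ)) * hαeq
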